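/- arXiv:quant-ph/0309104 — 2 statements merged into one kernel-verified Lean document; each statement's English description precedes it below -/
import Mathlib

section
/- Let N ≥ 3 and let v, w ∈ ℂ^N be unit vectors (‖v‖ = ‖w‖ = 1, Hermitian norm) with vᵀ v = wᵀ w, where vᵀ v = Σ_j v_j² is the bilinear dot product without complex conjugation. Then there exists a real special orthogonal matrix O ∈ SO(N) such that O v = w. In other words, SO(N) acts transitively on the intersection of the unit sphere of ℂ^N with each level set of the quadratic form v ↦ vᵀ v. -/
open Matrix Complex

noncomputable section

/-- Two pairs of vectors with equal Gram matrices are related by a linear isometry. -/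
theorem exists_isometry_pair {N : ℕ} (a b c d : EuclideanSpace ℝ (Fin N))
    (h1 : inner ℝ a a = (inner ℝ c c : ℝ))
    (h2 : inner ℝ b b = (inner ℝ d d : ℝ))
    (h3 : inner ℝ a b = (inner ℝ c d : ℝ)) :
    ∃ Φ : EuclideanSpace ℝ (Fin N) →ₗᵢ[ℝ] EuclideanSpace ℝ (Fin N), Φ a = c ∧ Φ b = d := by
  classical
  let E := EuclideanSpace ℝ (Fin N)
  let f₀ : (Fin 2 → ℝ) →ₗ[ℝ] E :=
    ((LinearMap.proj 0 : (Fin 2 → ℝ) →ₗ[ℝ] ℝ).smulRight a) +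
      ((LinearMap.proj 1 : (Fin 2 → ℝ) →ₗ[ℝ] ℝ).smulRight b)
  let g₀ : (Fin 2 → ℝ) →ₗ[ℝ] E :=
    ((LinearMap.proj 0 : (Fin 2 → ℝ) →ₗ[ℝ] ℝ).smulRight c) +
      ((LinearMap.proj 1 : (Fin 2 → ℝ) →ₗ[ℝ] ℝ).smulRight d)
  have hf₀ : ∀ x, f₀ x = x 0 • a + x 1 • b := fun x => rfl
  have hg₀ : ∀ x, g₀ x = x 0 • c + x 1 • d := fun x => rfl
  have hinner : ∀ x y, (inner ℝ (f₀ x) (f₀ y) : ℝ) = inner ℝ (g₀ x) (g₀ y) := by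
    intro x y
    rw [hf₀, hf₀, hg₀, hg₀]
    simp only [inner_add_left, inner_add_right, real_inner_smul_left, real_inner_smul_right]
    have h3' : (inner ℝ b a : ℝ) = inner ℝ d c :=
      (real_inner_comm a b).trans (h3.trans (real_inner_comm c d).symm)
    rw [h1, h2, h3, h3']
  have hnorm : ∀ x, ‖f₀ x‖ = ‖g₀ x‖ := by
    intro x
    rw [norm_eq_sqrt_real_inner, norm_eq_sqrt_real_inner, hinner]
  have hker : LinearMap.ker f₀ ≤ LinearMap.ker g₀ := by
    intro x hx
    rw [LinearMap.mem_ker] at hx ⊢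
    have : ‖g₀ x‖ = 0 := by rw [← hnorm, hx, norm_zero]
    exact norm_eq_zero.mp this
  let L0 : ((Fin 2 → ℝ) ⧸ LinearMap.ker f₀) →ₗ[ℝ] E := (LinearMap.ker f₀).liftQ g₀ hker
  let e := f₀.quotKerEquivRange
  let L1 : LinearMap.range f₀ →ₗ[ℝ] E := L0 ∘ₗ (e.symm : LinearMap.range f₀ →ₗ[ℝ] _)
  have key : ∀ (x : Fin 2 → ℝ) (hx : f₀ x ∈ LinearMap.range f₀), L1 ⟨f₀ x, hx⟩ = g₀ x := by
    intro x hx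
    have he : e.symm ⟨f₀ x, hx⟩ = Submodule.Quotient.mk x := by
      apply e.injective
      rw [LinearEquiv.apply_symm_apply]
      ext
      simp [e, LinearMap.quotKerEquivRange_apply_mk]
    show L0 (e.symm ⟨f₀ x, hx⟩) = g₀ x
    rw [he]
    exact Submodule.liftQ_apply _ _ _
  have hL1norm : ∀ y : LinearMap.range f₀, ‖L1 y‖ = ‖y‖ := by
    rintro ⟨-, x, rfl⟩
    erw [key x]
    rw [← hnorm x]
    rfl
  let Li : LinearMap.range f₀ →ₗᵢ[ℝ] E := ⟨L1, hL1norm⟩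
  have main : ∀ (x : Fin 2 → ℝ), Li.extend (f₀ x) = g₀ x := by
    intro x
    have hx : f₀ x ∈ LinearMap.range f₀ := LinearMap.mem_range.mpr ⟨x, rfl⟩
    have h := Li.extend_apply (⟨f₀ x, hx⟩ : LinearMap.range f₀)
    rw [show ((⟨f₀ x, hx⟩ : LinearMap.range f₀) : EuclideanSpace ℝ (Fin N)) = f₀ x from rfl] at h
    rw [h]
    exact key x hx
  have hfa : f₀ ![1, 0] = a := by
    rw [hf₀]; simp only [Matrix.cons_val_zero, Matrix.cons_val_one, Matrix.head_cons,
      one_smul, zero_smul, add_zero]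
  have hfb : f₀ ![0, 1] = b := by
    rw [hf₀]; simp only [Matrix.cons_val_zero, Matrix.cons_val_one, Matrix.head_cons,
      one_smul, zero_smul, zero_add]
  have hga : g₀ ![1, 0] = c := by
    rw [hg₀]; simp only [Matrix.cons_val_zero, Matrix.cons_val_one, Matrix.head_cons,
      one_smul, zero_smul, add_zero]
  have hgb : g₀ ![0, 1] = d := by
    rw [hg₀]; simp only [Matrix.cons_val_zero, Matrix.cons_val_one, Matrix.head_cons,
      one_smul, zero_smul, zero_add]
  exact ⟨Li.extend, by rw [← hfa, ← hga]; exact main _, by rw [← hfb, ← hgb]; exact main _⟩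

/-- Every linear isometry of Euclidean space is given by an orthogonal matrix. -/
theorem matrix_of_isometry {N : ℕ}
    (Φ : EuclideanSpace ℝ (Fin N) →ₗᵢ[ℝ] EuclideanSpace ℝ (Fin N)) :
    ∃ M : Matrix (Fin N) (Fin N) ℝ, Mᵀ * M = 1 ∧ (M.det = 1 ∨ M.det = -1) ∧
      ∀ x : EuclideanSpace ℝ (Fin N), M *ᵥ x = Φ x := by
  classical
  set M : Matrix (Fin N) (Fin N) ℝ := fun i j => Φ (EuclideanSpace.single j 1) i with hM
  have hmul : ∀ x : EuclideanSpace ℝ (Fin N), M *ᵥ x = Φ x := by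
    intro x
    have hx : ∑ j, x j • (EuclideanSpace.single j (1:ℝ)) = x := by
      have h0 := (EuclideanSpace.basisFun (Fin N) ℝ).sum_repr x
      simpa [EuclideanSpace.basisFun_apply, EuclideanSpace.basisFun_repr] using h0
    funext i
    conv_rhs => rw [← hx]
    rw [map_sum]
    simp only [_root_.map_smul]
    rw [WithLp.ofLp_sum, Finset.sum_apply]
    simp only [PiLp.smul_apply, smul_eq_mul]
    simp [mulVec, dotProduct, hM, mul_comm]
  have horth : Mᵀ * M = 1 := by
    ext i j
    have h := Φ.inner_map_map (EuclideanSpace.single j (1:ℝ)) (EuclideanSpace.single i 1)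
    simp only [PiLp.inner_apply, RCLike.inner_apply, conj_trivial,
      EuclideanSpace.single_apply] at h
    simp only [Matrix.mul_apply, Matrix.transpose_apply, Matrix.one_apply]
    simp only [hM]
    rw [h]
    simp [Finset.sum_ite_eq', eq_comm]
  have hdet : M.det = 1 ∨ M.det = -1 := by
    have : M.det * M.det = 1 := by
      have := congrArg Matrix.det horth
      rwa [Matrix.det_mul, Matrix.det_transpose, Matrix.det_one] at this
    exact mul_self_eq_one_iff.mp this
  exact ⟨M, horth, hdet, hmul⟩

/-- Householder reflection: orthogonal, determinant `-1`, fixes the orthogonal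
complement of the unit vector `u`. -/
theorem householder {N : ℕ} (u : EuclideanSpace ℝ (Fin N)) (hu : ‖u‖ = 1) :
    ∃ F : Matrix (Fin N) (Fin N) ℝ, Fᵀ * F = 1 ∧ F.det = -1 ∧
      ∀ x : EuclideanSpace ℝ (Fin N), (inner ℝ u x : ℝ) = 0 → F *ᵥ x = x := by
  classical
  have hu1 : ∑ k, u k * u k = 1 := by
    have h := real_inner_self_eq_norm_mul_norm u
    rw [hu, one_mul] at h
    simpa only [PiLp.inner_apply, RCLike.inner_apply, conj_trivial] using h
  set F : Matrix (Fin N) (Fin N) ℝ :=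
    fun i j => (if i = j then 1 else 0) - 2 * u i * u j with hF
  refine ⟨F, ?_, ?_, ?_⟩
  · ext i j
    simp only [Matrix.mul_apply, Matrix.transpose_apply, Matrix.one_apply]
    simp only [hF]
    have expand : ∀ k, ((if k = i then (1:ℝ) else 0) - 2 * u k * u i) *
        ((if k = j then 1 else 0) - 2 * u k * u j) =
        ((if k = i then (1:ℝ) else 0) * (if k = j then 1 else 0)
          - (if k = i then (1:ℝ) else 0) * (2 * u k * u j)
          - (if k = j then (1:ℝ) else 0) * (2 * u k * u i))
          + (4 * (u i * u j)) * (u k * u k) := by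
      intro k
      split_ifs with h1 h2 <;> ring
    rw [Finset.sum_congr rfl (fun k _ => expand k), Finset.sum_add_distrib,
      Finset.sum_sub_distrib, Finset.sum_sub_distrib, ← Finset.mul_sum, hu1]
    simp only [ite_mul, one_mul, zero_mul, Finset.sum_ite_eq', Finset.mem_univ, if_true]
    split_ifs with h
    · ring
    · ring
  · have hFeq : F = 1 + Matrix.replicateCol (Fin 1) (fun i => -2 * u i) * Matrix.replicateRow (Fin 1) u := by
      ext i j
      simp only [hF, Matrix.add_apply, Matrix.one_apply, Matrix.mul_apply,
        Matrix.replicateCol_apply, Matrix.replicateRow_apply, Finset.univ_unique, Finset.sum_singleton]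
      ring
    erw [hFeq, Matrix.det_one_add_replicateCol_mul_replicateRow (ι := Fin 1)]
    have h2 : (u : Fin N → ℝ) ⬝ᵥ (fun i => -2 * u i) = -2 * ∑ k, u k * u k := by
      rw [dotProduct, Finset.mul_sum]
      exact Finset.sum_congr rfl fun k _ => by ring
    rw [h2, hu1]
    norm_num
  · intro x hx
    have hux : ∑ j, u j * x j = 0 := by
      simpa [PiLp.inner_apply, RCLike.inner_apply, conj_trivial, mul_comm] using hx
    funext i
    show ∑ j, ((if i = j then (1:ℝ) else 0) - 2 * u i * u j) * x j = x i
    have expand : ∀ j, ((if i = j then (1:ℝ) else 0) - 2 * u i * u j) * x j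
        = (if i = j then (1:ℝ) else 0) * x j - (2 * u i) * (u j * x j) := by
      intro j; ring
    rw [Finset.sum_congr rfl (fun j _ => expand j), Finset.sum_sub_distrib,
      ← Finset.mul_sum, hux]
    simp [Finset.sum_ite_eq]

/-- A real special orthogonal matrix moving the pair `(a, b)` to `(c, d)` exists whenever
a linear isometry does, provided `3 ≤ N`. -/
theorem real_SO_step {N : ℕ} (hN : 3 ≤ N)
    (a b c d : EuclideanSpace ℝ (Fin N))
    (hiso : ∃ Φ : EuclideanSpace ℝ (Fin N) →ₗᵢ[ℝ] EuclideanSpace ℝ (Fin N), Φ a = c ∧ Φ b = d) :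
    ∃ M : Matrix (Fin N) (Fin N) ℝ, Mᵀ * M = 1 ∧ M.det = 1 ∧ M *ᵥ a = c ∧ M *ᵥ b = d := by
  classical
  obtain ⟨Φ, hΦa, hΦb⟩ := hiso
  obtain ⟨M, hMo, hMd, hMx⟩ := matrix_of_isometry Φ
  rcases hMd with hMd | hMd
  · exact ⟨M, hMo, hMd, by rw [hMx, hΦa], by rw [hMx, hΦb]⟩
  · set K : Submodule ℝ (EuclideanSpace ℝ (Fin N)) := Submodule.span ℝ ({c, d} : Set _) with hK
    have hKfr : Module.finrank ℝ K ≤ 2 := by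
      refine (finrank_span_le_card ({c, d} : Set _)).trans ?_
      have : ({c, d} : Set (EuclideanSpace ℝ (Fin N))).toFinset ⊆ {c, d} := by
        intro x hx
        simpa using hx
      calc ({c, d} : Set (EuclideanSpace ℝ (Fin N))).toFinset.card
          ≤ ({c, d} : Finset (EuclideanSpace ℝ (Fin N))).card := Finset.card_le_card this
        _ ≤ 2 := Finset.card_insert_le _ _ |>.trans (by simp)
    have hKorth : Kᗮ ≠ ⊥ := by
      intro hbot
      have htop : K = ⊤ := Submodule.orthogonal_eq_bot_iff.mp hbot
      have : Module.finrank ℝ (EuclideanSpace ℝ (Fin N)) ≤ 2 := by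
        rw [← finrank_top ℝ (EuclideanSpace ℝ (Fin N)), ← htop]
        exact hKfr
      rw [finrank_euclideanSpace, Fintype.card_fin] at this
      omega
    obtain ⟨u', hu'mem, hu'ne⟩ := Submodule.ne_bot_iff _ |>.mp hKorth
    set u : EuclideanSpace ℝ (Fin N) := ‖u'‖⁻¹ • u' with hu
    have hunorm : ‖u‖ = 1 := by
      rw [hu, norm_smul, norm_inv, norm_norm, inv_mul_cancel₀ (norm_ne_zero_iff.mpr hu'ne)]
    have huc : (inner ℝ u c : ℝ) = 0 := by
      have hcK : c ∈ K := Submodule.subset_span (by simp)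
      have := (Submodule.mem_orthogonal K u').mp hu'mem c hcK
      rw [hu, real_inner_smul_left, real_inner_comm c u', this, mul_zero]
    have hud : (inner ℝ u d : ℝ) = 0 := by
      have hdK : d ∈ K := Submodule.subset_span (by simp)
      have := (Submodule.mem_orthogonal K u').mp hu'mem d hdK
      rw [hu, real_inner_smul_left, real_inner_comm d u', this, mul_zero]
    obtain ⟨F, hFo, hFd, hFfix⟩ := householder u hunorm
    refine ⟨F * M, ?_, ?_, ?_, ?_⟩
    · rw [Matrix.transpose_mul, Matrix.mul_assoc, ← Matrix.mul_assoc Fᵀ F M, hFo,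
        Matrix.one_mul, hMo]
    · rw [Matrix.det_mul, hFd, hMd]; norm_num
    · rw [← Matrix.mulVec_mulVec, hMx, hΦa, hFfix c huc]
    · rw [← Matrix.mulVec_mulVec, hMx, hΦb, hFfix d hud]

/-- **`SO(N)` acts transitively on the unit-sphere level sets of `v ↦ vᵀv`:** for
`N ≥ 3` and unit vectors `v, w ∈ ℂ^N` with `vᵀv = wᵀw`, there is a real special
orthogonal matrix `O` with `O v = w`. -/
theorem SO_transitive_on_level_sets (N : ℕ) (hN : 3 ≤ N)
    (v w : Fin N → ℂ)
    (hv : star v ⬝ᵥ v = 1) (hw : star w ⬝ᵥ w = 1)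
    (hQ : v ⬝ᵥ v = w ⬝ᵥ w) :
    ∃ O : Matrix (Fin N) (Fin N) ℂ,
      (∀ i j, (O i j).im = 0) ∧ Oᵀ * O = 1 ∧ O.det = 1 ∧ O *ᵥ v = w := by
  classical
  set a : EuclideanSpace ℝ (Fin N) := WithLp.toLp 2 (fun i => (v i).re) with ha
  set b : EuclideanSpace ℝ (Fin N) := WithLp.toLp 2 (fun i => (v i).im) with hb
  set c : EuclideanSpace ℝ (Fin N) := WithLp.toLp 2 (fun i => (w i).re) with hc
  set d : EuclideanSpace ℝ (Fin N) := WithLp.toLp 2 (fun i => (w i).im) with hd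
  have hinner : ∀ x y : EuclideanSpace ℝ (Fin N), (inner ℝ x y : ℝ) = ∑ i, x i * y i := by
    intro x y
    simp [PiLp.inner_apply, RCLike.inner_apply, conj_trivial, mul_comm]
  -- real identities extracted from the hypotheses
  have hv1 : ∑ i, ((v i).re * (v i).re + (v i).im * (v i).im) = 1 := by
    have h := congrArg Complex.re hv
    simpa [dotProduct, Complex.re_sum, Complex.mul_re, neg_mul, sub_neg_eq_add] using h
  have hw1 : ∑ i, ((w i).re * (w i).re + (w i).im * (w i).im) = 1 := by
    have h := congrArg Complex.re hw
    simpa [dotProduct, Complex.re_sum, Complex.mul_re, neg_mul, sub_neg_eq_add] using h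
  have hQre : ∑ i, ((v i).re * (v i).re - (v i).im * (v i).im)
      = ∑ i, ((w i).re * (w i).re - (w i).im * (w i).im) := by
    have h := congrArg Complex.re hQ
    simpa [dotProduct, Complex.re_sum, Complex.mul_re] using h
  have hQim : ∑ i, ((v i).re * (v i).im + (v i).im * (v i).re)
      = ∑ i, ((w i).re * (w i).im + (w i).im * (w i).re) := by
    have h := congrArg Complex.im hQ
    simpa [dotProduct, Complex.im_sum, Complex.mul_im] using h
  simp only [Finset.sum_add_distrib] at hv1 hw1 hQim
  simp only [Finset.sum_sub_distrib] at hQre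
  have hAB : ∑ i, (v i).im * (v i).re = ∑ i, (v i).re * (v i).im :=
    Finset.sum_congr rfl fun i _ => mul_comm _ _
  have hCD : ∑ i, (w i).im * (w i).re = ∑ i, (w i).re * (w i).im :=
    Finset.sum_congr rfl fun i _ => mul_comm _ _
  rw [hAB, hCD] at hQim
  have h1 : (inner ℝ a a : ℝ) = inner ℝ c c := by
    rw [hinner, hinner]
    show ∑ i, (v i).re * (v i).re = ∑ i, (w i).re * (w i).re
    linarith
  have h2 : (inner ℝ b b : ℝ) = inner ℝ d d := by
    rw [hinner, hinner]
    show ∑ i, (v i).im * (v i).im = ∑ i, (w i).im * (w i).im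
    linarith
  have h3 : (inner ℝ a b : ℝ) = inner ℝ c d := by
    rw [hinner, hinner]
    show ∑ i, (v i).re * (v i).im = ∑ i, (w i).re * (w i).im
    linarith
  obtain ⟨M, hMo, hMd, hMa, hMb⟩ :=
    real_SO_step hN a b c d (exists_isometry_pair a b c d h1 h2 h3)
  refine ⟨M.map (algebraMap ℝ ℂ), ?_, ?_, ?_, ?_⟩
  · intro i j
    simp [Matrix.map_apply]
  · rw [← Matrix.transpose_map, ← Matrix.map_mul, hMo,
      Matrix.map_one _ (map_zero _) (map_one _)]
  · rw [show M.map ⇑(algebraMap ℝ ℂ) = (algebraMap ℝ ℂ).mapMatrix M from rfl,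
      ← RingHom.map_det, hMd, _root_.map_one]
  · funext i
    have hre : ∑ j, M i j * (v j).re = (w i).re := congrFun hMa i
    have him : ∑ j, M i j * (v j).im = (w i).im := congrFun hMb i
    show ∑ j, (algebraMap ℝ ℂ) (M i j) * v j = w i
    have key : ∀ j, (algebraMap ℝ ℂ) (M i j) * v j
        = ((M i j * (v j).re : ℝ) : ℂ) + ((M i j * (v j).im : ℝ) : ℂ) * I := by
      intro j
      simp only [Complex.ext_iff, Complex.add_re, Complex.add_im, Complex.mul_re,
        Complex.mul_im, Complex.ofReal_re, Complex.ofReal_im, Complex.I_re, Complex.I_im,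
        Complex.coe_algebraMap]
      constructor <;> ring
    rw [Finset.sum_congr rfl (fun j _ => key j), Finset.sum_add_distrib, ← Finset.sum_mul,
      ← Complex.ofReal_sum, ← Complex.ofReal_sum, hre, him, Complex.re_add_im]
end
end

section
/- Let n be even with n ≥ 2, N = 2^n, and let φ, ψ ∈ ℂ^N be unit vectors with φᵀ S φ = ψᵀ S ψ. Then there exists k ∈ SU(N) with kᵀ S k = S and k φ = ψ. In other words, the symmetry group K of the concurrence form acts transitively on the normalized states in each level set of the concurrence quadratic form ψ ↦ ψᵀSψ. -/
open Matrix Complex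

noncomputable section

/-- Number of ones in the binary expansion of `j`. -/
def popCnt (j : ℕ) : ℕ := (Nat.digits 2 j).sum

/-- The `N × N` matrix `S = (-iσ^y) ⊗ ⋯ ⊗ (-iσ^y)` (`n` factors), `N = 2^n`;
equivalently `S |j⟩ = (-1)^{#j} |N-1-j⟩`. -/
def Smat (n : ℕ) : Matrix (Fin (2 ^ n)) (Fin (2 ^ n)) ℂ :=
  fun k j => if (k : ℕ) + (j : ℕ) = 2 ^ n - 1 then (-1 : ℂ) ^ popCnt (j : ℕ) else 0

/-- The standard entangler `E₀` (for `n` even):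
`E₀ = (1/√2) Σ_{j<N/2} ( |j⟩⟨2j| + i|j⟩⟨2j+1| + (-1)^{#j}(|N-j-1⟩⟨2j| - i|N-j-1⟩⟨2j+1|) )`. -/
def E0 (n : ℕ) : Matrix (Fin (2 ^ n)) (Fin (2 ^ n)) ℂ :=
  fun r c =>
    (Real.sqrt 2 : ℂ)⁻¹ *
      (if (r : ℕ) < 2 ^ n / 2 then
        (if (c : ℕ) = 2 * (r : ℕ) then 1
         else if (c : ℕ) = 2 * (r : ℕ) + 1 then Complex.I else 0)
      else
        (if (c : ℕ) = 2 * (2 ^ n - 1 - (r : ℕ)) then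
            (-1 : ℂ) ^ popCnt (2 ^ n - 1 - (r : ℕ))
         else if (c : ℕ) = 2 * (2 ^ n - 1 - (r : ℕ)) + 1 then
            -Complex.I * (-1 : ℂ) ^ popCnt (2 ^ n - 1 - (r : ℕ))
         else 0))

/-- `Σ = Σ_{j<N/2} ( |j⟩⟨N/2+j| - |N/2+j⟩⟨j| )`. -/
def SigmaMat (n : ℕ) : Matrix (Fin (2 ^ n)) (Fin (2 ^ n)) ℂ :=
  fun r c =>
    if (c : ℕ) = (r : ℕ) + 2 ^ n / 2 then 1
    else if (r : ℕ) = (c : ℕ) + 2 ^ n / 2 then -1 else 0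

/-- The standard finagler `F₀` (for `n` odd):
`F₀ = (1/√2) Σ_{j<N/2} ( |j⟩⟨j| + |N-j-1⟩⟨j| + (-1)^{#j}(|j⟩⟨N/2+j| - |N-j-1⟩⟨N/2+j|) )`. -/
def F0 (n : ℕ) : Matrix (Fin (2 ^ n)) (Fin (2 ^ n)) ℂ :=
  fun r c =>
    (Real.sqrt 2 : ℂ)⁻¹ *
      (if (r : ℕ) < 2 ^ n / 2 then
        (if (c : ℕ) = (r : ℕ) then 1
         else if (c : ℕ) = (r : ℕ) + 2 ^ n / 2 then (-1 : ℂ) ^ popCnt (r : ℕ) else 0)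
      else
        (if (c : ℕ) = 2 ^ n - 1 - (r : ℕ) then 1
         else if (c : ℕ) = (2 ^ n - 1 - (r : ℕ)) + 2 ^ n / 2 then
            -(-1 : ℂ) ^ popCnt (2 ^ n - 1 - (r : ℕ))
         else 0))

/-- The concurrence capacity `κ(v) = sup { |(vψ)ᵀ S (vψ)| : ‖ψ‖ = 1, ψᵀSψ = 0 }`. -/
def kappa (n : ℕ) (v : Matrix (Fin (2 ^ n)) (Fin (2 ^ n)) ℂ) : ℝ :=
  sSup { r : ℝ | ∃ ψ : Fin (2 ^ n) → ℂ,
    star ψ ⬝ᵥ ψ = 1 ∧ ψ ⬝ᵥ ((Smat n) *ᵥ ψ) = 0 ∧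
    r = ‖(v *ᵥ ψ) ⬝ᵥ ((Smat n) *ᵥ (v *ᵥ ψ))‖ }


section Aux

variable {N : ℕ}

/-- Householder reflection in the hyperplane orthogonal to `u`. -/
def Hh (u : Fin N → ℝ) : Matrix (Fin N) (Fin N) ℝ :=
  1 - (2 / (u ⬝ᵥ u)) • vecMulVec u u

lemma vecMulVec_symm (u : Fin N → ℝ) : (vecMulVec u u)ᵀ = vecMulVec u u := by
  ext i j; simp [vecMulVec_apply, mul_comm]

lemma vecMulVec_sq (u : Fin N → ℝ) :
    vecMulVec u u * vecMulVec u u = (u ⬝ᵥ u) • vecMulVec u u := by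
  ext i j
  simp only [mul_apply, vecMulVec_apply, Matrix.smul_apply, smul_eq_mul, dotProduct]
  rw [Finset.sum_mul]
  exact Finset.sum_congr rfl fun k _ => by ring

lemma Hh_transpose (u : Fin N → ℝ) : (Hh u)ᵀ = Hh u := by
  simp [Hh, transpose_sub, transpose_smul, vecMulVec_symm]

lemma Hh_mul_self (u : Fin N → ℝ) (hu : u ⬝ᵥ u ≠ 0) : Hh u * Hh u = 1 := by
  set t := 2 / (u ⬝ᵥ u) with ht
  have : Hh u * Hh u = 1 - (2*t) • vecMulVec u u + (t * t) • (vecMulVec u u * vecMulVec u u) := by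
    simp only [Hh, sub_mul, mul_sub, one_mul, mul_one, smul_mul_assoc, mul_smul_comm, smul_smul]
    abel_nf
    module
  rw [this, vecMulVec_sq, smul_smul]
  have h2 : t * t * (u ⬝ᵥ u) = 2 * t := by
    have h3 : t * (u ⬝ᵥ u) = 2 := by rw [ht]; exact div_mul_cancel₀ 2 hu
    rw [mul_assoc, h3, mul_comm]
  rw [h2]; abel

lemma Hh_orth (u : Fin N → ℝ) (hu : u ⬝ᵥ u ≠ 0) : (Hh u)ᵀ * Hh u = 1 := by
  rw [Hh_transpose]; exact Hh_mul_self u hu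

lemma vecMulVec_mulVec (u x : Fin N → ℝ) :
    vecMulVec u u *ᵥ x = (u ⬝ᵥ x) • u := by
  ext i
  simp [mulVec, vecMulVec_apply, dotProduct, Finset.sum_mul]
  exact Finset.sum_congr rfl fun k _ => by ring

lemma Hh_mulVec (u x : Fin N → ℝ) :
    Hh u *ᵥ x = x - ((2 / (u ⬝ᵥ u)) * (u ⬝ᵥ x)) • u := by
  simp [Hh, sub_mulVec, smul_mulVec, _root_.vecMulVec_mulVec, smul_smul]

lemma Hh_mulVec_orth (u x : Fin N → ℝ) (h : u ⬝ᵥ x = 0) : Hh u *ᵥ x = x := by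
  simp [Hh_mulVec, h]

lemma Hh_det (u : Fin N → ℝ) (hu : u ⬝ᵥ u ≠ 0) : (Hh u).det = -1 := by
  have : Hh u = 1 + vecMulVec ((-(2 / (u ⬝ᵥ u))) • u) u := by
    ext i j
    simp [Hh, vecMulVec_apply, Matrix.smul_apply]
    ring
  rw [this, vecMulVec_eq (Fin 1), det_one_add_replicateCol_mul_replicateRow]
  have : u ⬝ᵥ (-(2 / (u ⬝ᵥ u)) • u) = -2 := by
    rw [dotProduct_smul, smul_eq_mul, neg_mul]
    field_simp
  rw [this]; norm_num

/-- Householder maps u to v when ‖u‖ = ‖v‖. -/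
lemma Hh_maps (u v : Fin N → ℝ) (h : u ⬝ᵥ u = v ⬝ᵥ v) (hne : u ≠ v) :
    Hh (u - v) *ᵥ u = v := by
  have hsub : (u - v) ⬝ᵥ (u - v) = 2 * ((u - v) ⬝ᵥ u) := by
    simp only [sub_dotProduct, dotProduct_sub]
    rw [dotProduct_comm v u] at *
    nlinarith [dotProduct_comm u v]
  have hnz : (u - v) ⬝ᵥ (u - v) ≠ 0 := by
    simpa [sub_eq_zero] using (dotProduct_self_eq_zero (v := u - v)).not.mpr
      (by simpa [sub_eq_zero] using hne)
  have hcoef : 2 / ((u - v) ⬝ᵥ (u - v)) * ((u - v) ⬝ᵥ u) = 1 := by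
    have h2 : (u - v) ⬝ᵥ u ≠ 0 := by
      intro h0; rw [hsub, h0] at hnz; simp at hnz
    rw [hsub, div_mul_eq_mul_div, mul_comm 2 ((u - v) ⬝ᵥ u)]
    exact div_self (by rw [mul_comm, ← hsub]; exact hnz)
  rw [Hh_mulVec, hcoef, one_smul]
  abel

lemma orth_dot {M : Matrix (Fin N) (Fin N) ℝ} (hM : Mᵀ * M = 1) (x y : Fin N → ℝ) :
    (M *ᵥ x) ⬝ᵥ (M *ᵥ y) = x ⬝ᵥ y := by
  rw [dotProduct_comm, dotProduct_mulVec, ← mulVec_transpose, mulVec_mulVec, hM, one_mulVec,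
    dotProduct_comm]

/-- Existence of a nonzero vector orthogonal to two given ones, `N ≥ 3`. -/
lemma exists_orth (hN : 3 ≤ N) (c d : Fin N → ℝ) :
    ∃ e : Fin N → ℝ, e ≠ 0 ∧ e ⬝ᵥ c = 0 ∧ e ⬝ᵥ d = 0 := by
  let f : (Fin N → ℝ) →ₗ[ℝ] ℝ × ℝ :=
    { toFun := fun v => (c ⬝ᵥ v, d ⬝ᵥ v)
      map_add' := by intro x y; simp [dotProduct_add]
      map_smul' := by intro t x; simp [dotProduct_smul] }
  have hni : ¬ Function.Injective f := by
    intro hi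
    have := LinearMap.finrank_le_finrank_of_injective hi
    simp only [Module.finrank_pi, Fintype.card_fin] at this
    have h2 : Module.finrank ℝ (ℝ × ℝ) = 2 := by simp
    omega
  rw [injective_iff_map_eq_zero'] at hni
  push_neg at hni
  obtain ⟨e, he⟩ := hni
  rcases he with ⟨hfe, hne⟩ | ⟨hne, hfe⟩
  · exact ⟨e, hne, by
      have := congrArg Prod.fst hfe
      simpa [f, dotProduct_comm] using this, by
      have := congrArg Prod.snd hfe
      simpa [f, dotProduct_comm] using this⟩
  · exact absurd (by rw [hfe]; exact map_zero f) hne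

/-- Witt-type transitivity for `SO(N)` acting on `ℝ^N`, on pairs with equal Gram data. -/
lemma witt (hN : 3 ≤ N) (a b c d : Fin N → ℝ)
    (h1 : a ⬝ᵥ a = c ⬝ᵥ c) (h2 : b ⬝ᵥ b = d ⬝ᵥ d) (h3 : a ⬝ᵥ b = c ⬝ᵥ d) :
    ∃ O : Matrix (Fin N) (Fin N) ℝ, Oᵀ * O = 1 ∧ O.det = 1 ∧ O *ᵥ a = c ∧ O *ᵥ b = d := by
  -- Step 1: O₁ maps a to c
  obtain ⟨O₁, hO₁, hO₁a⟩ : ∃ O₁ : Matrix (Fin N) (Fin N) ℝ, O₁ᵀ * O₁ = 1 ∧ O₁ *ᵥ a = c := by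
    by_cases hac : a = c
    · exact ⟨1, by simp, by simp [hac]⟩
    · exact ⟨Hh (a - c), Hh_orth _ (by
        simpa [sub_eq_zero] using (dotProduct_self_eq_zero (v := a - c)).not.mpr
          (by simpa [sub_eq_zero] using hac)), Hh_maps a c h1 hac⟩
  set b₁ := O₁ *ᵥ b with hb₁
  have hb₁b₁ : b₁ ⬝ᵥ b₁ = d ⬝ᵥ d := by rw [hb₁, orth_dot hO₁, h2]
  have hb₁c : b₁ ⬝ᵥ c = d ⬝ᵥ c := by
    have h' := orth_dot hO₁ b a
    rw [hO₁a, ← hb₁] at h'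
    rw [h', dotProduct_comm b a, h3, dotProduct_comm]
  -- Step 2: O₂ maps b₁ to d fixing c
  obtain ⟨O₂, hO₂, hO₂b, hO₂c⟩ : ∃ O₂ : Matrix (Fin N) (Fin N) ℝ,
      O₂ᵀ * O₂ = 1 ∧ O₂ *ᵥ b₁ = d ∧ O₂ *ᵥ c = c := by
    by_cases hbd : b₁ = d
    · exact ⟨1, by simp, by simp [hbd], by simp⟩
    · refine ⟨Hh (b₁ - d), Hh_orth _ (by
        simpa [sub_eq_zero] using (dotProduct_self_eq_zero (v := b₁ - d)).not.mpr
          (by simpa [sub_eq_zero] using hbd)), Hh_maps b₁ d hb₁b₁ hbd, ?_⟩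
      apply Hh_mulVec_orth
      simp [sub_dotProduct, hb₁c]
  set O₃ := O₂ * O₁ with hO₃
  have hO₃o : O₃ᵀ * O₃ = 1 := by
    rw [hO₃, transpose_mul, Matrix.mul_assoc, ← Matrix.mul_assoc O₂ᵀ, hO₂, Matrix.one_mul, hO₁]
  have hO₃a : O₃ *ᵥ a = c := by rw [hO₃, ← mulVec_mulVec, hO₁a, hO₂c]
  have hO₃b : O₃ *ᵥ b = d := by rw [hO₃, ← mulVec_mulVec, ← hb₁, hO₂b]
  have hdet : O₃.det = 1 ∨ O₃.det = -1 := by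
    have := congrArg Matrix.det hO₃o
    rw [Matrix.det_mul, Matrix.det_transpose, Matrix.det_one] at this
    exact mul_self_eq_one_iff.mp this
  rcases hdet with h | h
  · exact ⟨O₃, hO₃o, h, hO₃a, hO₃b⟩
  · obtain ⟨e, hne, hec, hed⟩ := exists_orth hN c d
    have heu : e ⬝ᵥ e ≠ 0 := (dotProduct_self_eq_zero (v := e)).not.mpr hne
    refine ⟨Hh e * O₃, ?_, ?_, ?_, ?_⟩
    · rw [transpose_mul, Matrix.mul_assoc, ← Matrix.mul_assoc (Hh e)ᵀ, Hh_orth _ heu,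
        Matrix.one_mul, hO₃o]
    · rw [Matrix.det_mul, Hh_det _ heu, h]; norm_num
    · rw [← mulVec_mulVec, hO₃a, Hh_mulVec_orth _ _ hec]
    · rw [← mulVec_mulVec, hO₃b, Hh_mulVec_orth _ _ hed]

lemma popCnt_rec (j : ℕ) : popCnt j = j % 2 + popCnt (j / 2) := by
  rcases Nat.eq_zero_or_pos j with h | h
  · simp [h, popCnt]
  · unfold popCnt
    rw [Nat.digits_def' (by norm_num : 1 < 2) h]
    simp

lemma popCnt_compl : ∀ n j k : ℕ, j + k = 2 ^ n - 1 → popCnt j + popCnt k = n := by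
  intro n
  induction n with
  | zero => intro j k h; simp at h; obtain ⟨hj, hk⟩ : j = 0 ∧ k = 0 := by omega
            simp [hj, hk, popCnt]
  | succ m ih =>
    intro j k h
    have hpow : 2 ^ (m + 1) = 2 * 2 ^ m := by ring
    have h2 : j / 2 + k / 2 = 2 ^ m - 1 ∧ j % 2 + k % 2 = 1 := by
      have hj := Nat.div_add_mod j 2
      have hk := Nat.div_add_mod k 2
      have hpos : 1 ≤ 2 ^ m := Nat.one_le_two_pow
      constructor <;> omega
    have := ih (j / 2) (k / 2) h2.1
    rw [popCnt_rec j, popCnt_rec k]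
    omega

lemma neg_one_pow_eq_of_even_add {a b : ℕ} (h : Even (a + b)) :
    ((-1 : ℂ)) ^ a = (-1) ^ b := by
  have h2 : (a + b) % 2 = 0 := Nat.even_iff.mp h
  rcases Nat.even_or_odd a with ha | ha
  · have hb : Even b := Nat.even_iff.mpr (by have := Nat.even_iff.mp ha; omega)
    rw [ha.neg_one_pow, hb.neg_one_pow]
  · have hb : Odd b := Nat.odd_iff.mpr (by have := Nat.odd_iff.mp ha; omega)
    rw [ha.neg_one_pow, hb.neg_one_pow]

lemma Smat_transpose (n : ℕ) (hev : Even n) : (Smat n)ᵀ = Smat n := by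
  ext k j
  simp only [transpose_apply, Smat]
  by_cases h : (k : ℕ) + (j : ℕ) = 2 ^ n - 1
  · rw [if_pos (by omega), if_pos h]
    exact neg_one_pow_eq_of_even_add (by rw [popCnt_compl n _ _ (by omega)]; exact hev)
  · rw [if_neg (by omega), if_neg h]

lemma Smat_real (n : ℕ) : (Smat n).map (starRingEnd ℂ) = Smat n := by
  ext k j
  simp only [Matrix.map_apply, Smat, apply_ite (starRingEnd ℂ), map_pow, map_neg, map_zero,
    _root_.map_one]

lemma Smat_mul_self (n : ℕ) (hev : Even n) : Smat n * Smat n = 1 := by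
  have hN : 0 < 2 ^ n := pow_pos (by norm_num) n
  ext k j
  rw [mul_apply]
  have hk : (k : ℕ) < 2 ^ n := k.isLt
  set r₀ : Fin (2 ^ n) := ⟨2 ^ n - 1 - (k : ℕ), by omega⟩ with hr₀
  rw [Finset.sum_eq_single r₀]
  · simp only [Smat, hr₀]
    rw [if_pos (show (k : ℕ) + (2 ^ n - 1 - (k : ℕ)) = 2 ^ n - 1 by omega)]
    by_cases hjk : (j : ℕ) = (k : ℕ)
    · have hkj : k = j := by exact Fin.ext (by omega)
      rw [if_pos (show (2 ^ n - 1 - (k : ℕ)) + (j : ℕ) = 2 ^ n - 1 by omega)]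
      rw [hkj, Matrix.one_apply_eq]
      rw [← pow_add]
      rw [hjk]
      have hcompl : popCnt (2 ^ n - 1 - (k : ℕ)) + popCnt (k : ℕ) = n :=
        popCnt_compl n _ _ (by omega)
      rw [hcompl]
      exact hev.neg_one_pow
    · rw [if_neg (show ¬((2 ^ n - 1 - (k : ℕ)) + (j : ℕ) = 2 ^ n - 1) by omega), mul_zero,
        Matrix.one_apply_ne (fun h => hjk (by rw [h]))]
  · intro b _ hb
    have : (k : ℕ) + (b : ℕ) ≠ 2 ^ n - 1 := by
      intro h; apply hb
      exact Fin.ext (show (b : ℕ) = 2 ^ n - 1 - (k : ℕ) by omega)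
    simp [Smat, this]
  · intro h; exact absurd (Finset.mem_univ r₀) h

/-- `U = ((1-i)/2)(1 + i S)`, a unitary with `Uᵀ U = S`. -/
def Umat (n : ℕ) : Matrix (Fin (2 ^ n)) (Fin (2 ^ n)) ℂ :=
  ((1 - Complex.I) / 2) • (1 + Complex.I • Smat n)

lemma Umat_transpose (n : ℕ) (hev : Even n) : (Umat n)ᵀ = Umat n := by
  simp [Umat, transpose_smul, transpose_add, transpose_smul, Smat_transpose n hev]

lemma Umat_sq (n : ℕ) (hev : Even n) : Umat n * Umat n = Smat n := by
  have key : (1 + Complex.I • Smat n) * (1 + Complex.I • Smat n)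
      = (2 * Complex.I) • Smat n := by
    simp only [Matrix.add_mul, Matrix.mul_add, Matrix.mul_one, Matrix.one_mul,
      smul_mul_assoc, mul_smul_comm, smul_smul, Smat_mul_self n hev]
    match_scalars <;> (ring_nf; try simp [Complex.I_sq]; try norm_num)
  rw [Umat, smul_mul_assoc, mul_smul_comm, smul_smul, key, smul_smul]
  have : (1 - Complex.I) / 2 * ((1 - Complex.I) / 2) * (2 * Complex.I) = 1 := by
    linear_combination ((2 * Complex.I - 4) / 4) * Complex.I_sq
  rw [this, one_smul]

lemma Umat_tU (n : ℕ) (hev : Even n) : (Umat n)ᵀ * Umat n = Smat n := by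
  rw [Umat_transpose n hev, Umat_sq n hev]

lemma Smat_conjTranspose (n : ℕ) (hev : Even n) : (Smat n)ᴴ = Smat n := by
  have h : (Smat n)ᴴ = ((Smat n).map (starRingEnd ℂ))ᵀ := rfl
  rw [h, Smat_real n, Smat_transpose n hev]

lemma Umat_star (n : ℕ) (hev : Even n) :
    star (Umat n) = ((1 + Complex.I) / 2) • (1 - Complex.I • Smat n) := by
  rw [Umat, star_smul, star_add]
  have h1 : star (1 : Matrix (Fin (2 ^ n)) (Fin (2 ^ n)) ℂ) = 1 := star_one _
  have h2 : star (Complex.I • Smat n) = (-Complex.I) • Smat n := by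
    rw [star_smul, Complex.star_def, Complex.conj_I]
    show _ • (Smat n)ᴴ = _
    rw [Smat_conjTranspose n hev]
  rw [h1, h2]
  have h3 : star ((1 - Complex.I) / 2) = (1 + Complex.I) / 2 := by
    simp [Complex.star_def, map_div₀]
  rw [h3, neg_smul, ← sub_eq_add_neg]

lemma Umat_unitary (n : ℕ) (hev : Even n) : star (Umat n) * Umat n = 1 := by
  rw [Umat_star n hev, Umat]
  have key : (1 - Complex.I • Smat n) * (1 + Complex.I • Smat n)
      = (2 : ℂ) • (1 : Matrix (Fin (2 ^ n)) (Fin (2 ^ n)) ℂ) := by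
    simp only [Matrix.sub_mul, Matrix.add_mul, Matrix.mul_add, Matrix.mul_one, Matrix.one_mul,
      smul_mul_assoc, mul_smul_comm, smul_smul, Smat_mul_self n hev]
    match_scalars <;> (ring_nf; try simp [Complex.I_sq]; try norm_num)
  rw [smul_mul_assoc, mul_smul_comm, smul_smul, key, smul_smul]
  have : (1 + Complex.I) / 2 * ((1 - Complex.I) / 2) * 2 = 1 := by
    linear_combination (-(1 : ℂ) / 2) * Complex.I_sq
  rw [this, one_smul]

lemma Umat_unitary' (n : ℕ) (hev : Even n) : Umat n * star (Umat n) = 1 :=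
  mul_eq_one_comm.mp (Umat_unitary n hev)

lemma map_mulVec_real {N : ℕ} (O : Matrix (Fin N) (Fin N) ℝ) (v : Fin N → ℝ) :
    (O.map Complex.ofRealHom) *ᵥ (fun i => (v i : ℂ)) = fun i => ((O *ᵥ v) i : ℂ) := by
  funext i
  simp only [mulVec, dotProduct, Matrix.map_apply, Complex.ofRealHom_eq_coe]
  push_cast
  rfl

lemma dot_sq_re {N : ℕ} (x : Fin N → ℂ) :
    (x ⬝ᵥ x).re = (fun i => (x i).re) ⬝ᵥ (fun i => (x i).re)
      - (fun i => (x i).im) ⬝ᵥ (fun i => (x i).im) := by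
  simp only [dotProduct, Complex.re_sum]
  rw [← Finset.sum_sub_distrib]
  exact Finset.sum_congr rfl fun i _ => by simp [Complex.mul_re]

lemma dot_sq_im {N : ℕ} (x : Fin N → ℂ) :
    (x ⬝ᵥ x).im = 2 * ((fun i => (x i).re) ⬝ᵥ (fun i => (x i).im)) := by
  simp only [dotProduct, Complex.im_sum]
  rw [Finset.mul_sum]
  exact Finset.sum_congr rfl fun i _ => by simp [Complex.mul_im]; ring

lemma dot_star_re {N : ℕ} (x : Fin N → ℂ) :
    (star x ⬝ᵥ x).re = (fun i => (x i).re) ⬝ᵥ (fun i => (x i).re)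
      + (fun i => (x i).im) ⬝ᵥ (fun i => (x i).im) := by
  simp only [dotProduct, Pi.star_apply, Complex.re_sum]
  rw [← Finset.sum_add_distrib]
  exact Finset.sum_congr rfl fun i _ => by
    simp [Complex.mul_re, Complex.star_def]

end Aux

/-- **`K` acts transitively on the normalized states in each level set of the
concurrence quadratic form** (for `n` even, `n ≥ 2`): if `φ, ψ` are unit vectors with
`φᵀSφ = ψᵀSψ`, then there is `k ∈ SU(N)` with `kᵀ S k = S` and `k φ = ψ`. -/
theorem K_transitive_on_concurrence_level_sets (n : ℕ) (hn : 2 ≤ n) (hev : Even n)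
    (φ ψ : Fin (2 ^ n) → ℂ)
    (hφ : star φ ⬝ᵥ φ = 1) (hψ : star ψ ⬝ᵥ ψ = 1)
    (hQ : φ ⬝ᵥ ((Smat n) *ᵥ φ) = ψ ⬝ᵥ ((Smat n) *ᵥ ψ)) :
    ∃ k : Matrix (Fin (2 ^ n)) (Fin (2 ^ n)) ℂ,
      k ∈ Matrix.unitaryGroup (Fin (2 ^ n)) ℂ ∧ k.det = 1 ∧
      kᵀ * Smat n * k = Smat n ∧ k *ᵥ φ = ψ := by
  classical
  set U := Umat n with hUdef
  have hUU : star U * U = 1 := Umat_unitary n hev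
  have hUU' : U * star U = 1 := Umat_unitary' n hev
  have hUtU : Uᵀ * U = Smat n := Umat_tU n hev
  set x := U *ᵥ φ with hx
  set y := U *ᵥ ψ with hy
  -- unit-norm facts for x, y
  have hx1 : star x ⬝ᵥ x = 1 := by
    rw [hx, star_mulVec, dotProduct_mulVec, vecMul_vecMul]
    rw [show (Umat n)ᴴ = star U from rfl, hUU, vecMul_one, hφ]
  have hy1 : star y ⬝ᵥ y = 1 := by
    rw [hy, star_mulVec, dotProduct_mulVec, vecMul_vecMul]
    rw [show (Umat n)ᴴ = star U from rfl, hUU, vecMul_one, hψ]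
  -- bilinear-form facts for x, y
  have hmv : ∀ v : Fin (2 ^ n) → ℂ, U *ᵥ v = v ᵥ* Uᵀ := by
    intro v; rw [← Matrix.mulVec_transpose, transpose_transpose]
  have hkey : ∀ v : Fin (2 ^ n) → ℂ, (U *ᵥ v) ⬝ᵥ (U *ᵥ v) = v ⬝ᵥ (Smat n *ᵥ v) := by
    intro v
    rw [dotProduct_mulVec, ← vecMul_transpose, vecMul_vecMul, hUtU, dotProduct_mulVec]
  have hxx : x ⬝ᵥ x = φ ⬝ᵥ (Smat n *ᵥ φ) := by rw [hx]; exact hkey φ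
  have hyy : y ⬝ᵥ y = ψ ⬝ᵥ (Smat n *ᵥ ψ) := by rw [hy]; exact hkey ψ
  have hxy : x ⬝ᵥ x = y ⬝ᵥ y := by rw [hxx, hyy, hQ]
  -- real and imaginary parts
  set a : Fin (2 ^ n) → ℝ := fun i => (x i).re with ha
  set b : Fin (2 ^ n) → ℝ := fun i => (x i).im with hb
  set c : Fin (2 ^ n) → ℝ := fun i => (y i).re with hc
  set d : Fin (2 ^ n) → ℝ := fun i => (y i).im with hd
  have hsum1 : a ⬝ᵥ a + b ⬝ᵥ b = 1 := by
    have := congrArg Complex.re hx1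
    rwa [dot_star_re, Complex.one_re] at this
  have hsum2 : c ⬝ᵥ c + d ⬝ᵥ d = 1 := by
    have := congrArg Complex.re hy1
    rwa [dot_star_re, Complex.one_re] at this
  have hdiff : a ⬝ᵥ a - b ⬝ᵥ b = c ⬝ᵥ c - d ⬝ᵥ d := by
    have := congrArg Complex.re hxy
    rwa [dot_sq_re, dot_sq_re] at this
  have hcross : a ⬝ᵥ b = c ⬝ᵥ d := by
    have := congrArg Complex.im hxy
    rw [dot_sq_im, dot_sq_im] at this
    linarith
  have h1 : a ⬝ᵥ a = c ⬝ᵥ c := by linarith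
  have h2 : b ⬝ᵥ b = d ⬝ᵥ d := by linarith
  -- apply Witt transitivity
  have hN3 : 3 ≤ 2 ^ n := by
    calc 3 ≤ 2 ^ 2 := by norm_num
    _ ≤ 2 ^ n := Nat.pow_le_pow_right (by norm_num) hn
  obtain ⟨O, hOo, hOdet, hOa, hOb⟩ := witt hN3 a b c d h1 h2 hcross
  set Oc : Matrix (Fin (2 ^ n)) (Fin (2 ^ n)) ℂ := O.map Complex.ofRealHom with hOc
  -- basic facts about Oc
  have hOcT : Ocᵀ = Oᵀ.map Complex.ofRealHom := by
    ext i j; simp [hOc, Matrix.map_apply]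
  have hOcstar : star Oc = Ocᵀ := by
    ext i j
    simp [hOc, Matrix.map_apply, conjTranspose_apply, Complex.conj_ofReal]
  have hOcO : Ocᵀ * Oc = 1 := by
    rw [hOcT, hOc, ← Matrix.map_mul, hOo]
    exact Matrix.map_one _ (map_zero _) (map_one _)
  have hOcdet : Oc.det = 1 := by
    have h := RingHom.map_det Complex.ofRealHom O
    rw [hOdet, _root_.map_one] at h
    rw [hOc]
    exact h.symm
  -- Oc maps x to y
  have hxd : x = (fun i => ((a i : ℝ) : ℂ)) + Complex.I • (fun i => ((b i : ℝ) : ℂ)) := by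
    funext i
    simp only [Pi.add_apply, Pi.smul_apply, smul_eq_mul, ha, hb]
    rw [mul_comm]
    exact (Complex.re_add_im (x i)).symm
  have hyd : y = (fun i => ((c i : ℝ) : ℂ)) + Complex.I • (fun i => ((d i : ℝ) : ℂ)) := by
    funext i
    simp only [Pi.add_apply, Pi.smul_apply, smul_eq_mul, hc, hd]
    rw [mul_comm]
    exact (Complex.re_add_im (y i)).symm
  have hOx : Oc *ᵥ x = y := by
    rw [hxd, mulVec_add, mulVec_smul, hOc, map_mulVec_real, map_mulVec_real, hOa, hOb, hyd]
  -- the sought element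
  refine ⟨star U * Oc * U, ?_, ?_, ?_, ?_⟩
  · -- unitarity
    have hUmem : U ∈ Matrix.unitaryGroup (Fin (2 ^ n)) ℂ :=
      Matrix.mem_unitaryGroup_iff'.mpr hUU
    have hOmem : Oc ∈ Matrix.unitaryGroup (Fin (2 ^ n)) ℂ := by
      apply Matrix.mem_unitaryGroup_iff'.mpr
      rw [show star Oc = Ocᵀ from hOcstar, hOcO]
    exact mul_mem (mul_mem (Unitary.star_mem hUmem) hOmem) hUmem
  · -- determinant
    have hdU : star U.det * U.det = 1 := by
      have := congrArg Matrix.det hUU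
      rwa [Matrix.det_mul, Matrix.det_one,
        show star U = Uᴴ from rfl, Matrix.det_conjTranspose] at this
    rw [Matrix.det_mul, Matrix.det_mul, show star U = Uᴴ from rfl,
      Matrix.det_conjTranspose, hOcdet, mul_one, ← Matrix.det_conjTranspose,
      show Uᴴ = star U from rfl]
    calc (star U).det * U.det = star U.det * U.det := by
          rw [show star U = Uᴴ from rfl, Matrix.det_conjTranspose]
    _ = 1 := hdU
  · -- preserves the bilinear form
    have hconjU : U.map (starRingEnd ℂ) * Uᵀ = 1 := by
      have hmap := congrArg (fun M => M.map (starRingEnd ℂ)) hUU'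
      simp only [Matrix.map_mul] at hmap
      have h2 : (star U).map (starRingEnd ℂ) = Uᵀ := by
        ext i j
        simp [Matrix.map_apply, conjTranspose_apply]
      rw [h2] at hmap
      rw [hmap]
      exact Matrix.map_one _ (map_zero _) (map_one _)
    have hstarT : (star U)ᵀ = U.map (starRingEnd ℂ) := by
      ext i j
      simp [Matrix.map_apply, conjTranspose_apply]
    rw [transpose_mul, transpose_mul, hstarT, ← hUtU]
    have e1 : ∀ Z, U * (star U * Z) = Z := fun Z => by
      rw [← Matrix.mul_assoc, hUU', Matrix.one_mul]
    have e2 : ∀ Z, U.map (starRingEnd ℂ) * (Uᵀ * Z) = Z := fun Z => by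
      rw [← Matrix.mul_assoc, hconjU, Matrix.one_mul]
    have e3 : ∀ Z, Ocᵀ * (Oc * Z) = Z := fun Z => by
      rw [← Matrix.mul_assoc, hOcO, Matrix.one_mul]
    simp only [Matrix.mul_assoc]
    rw [e1 (Oc * U), e2 (Oc * U), e3 U]
  · -- maps φ to ψ
    rw [← Matrix.mulVec_mulVec, ← Matrix.mulVec_mulVec, ← hx, hOx, hy,
      Matrix.mulVec_mulVec, hUU, one_mulVec]
end
end
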